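/- Let g ∈ L²(ℝ). For every ε > 0 there exists δ ∈ (0, 1/2) and a constant C > 0 (independent of g, x, t, ε) such that for all x ∈ ℝ and all t ∈ ℝ, |∫_{|ξ|≤8} e^{ixξ}(e^{it(ξ³+1/ξ)} − 1) ĝ(ξ) dξ| ≤ ε + (C|t|/δ)·‖g‖_{L²}. -/

import Mathlib

open MeasureTheory Complex Real

lemma aux_exp_norm_one (r : ℝ) : ‖Complex.exp (Complex.I * r)‖ = 1 := by
  rw [Complex.norm_exp]
  simp

lemma aux_exp_bound (θ : ℝ) : ‖Complex.exp (Complex.I * θ) - 1‖ ≤ |θ| := by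
  have hz : Complex.exp (Complex.I * θ) - 1
      = (↑(Real.cos θ - 1) + ↑(Real.sin θ) * Complex.I) := by
    rw [mul_comm, Complex.exp_mul_I, ← Complex.ofReal_cos, ← Complex.ofReal_sin]
    push_cast; ring
  have hnorm : ‖Complex.exp (Complex.I * θ) - 1‖ ^ 2
      = (Real.cos θ - 1) ^ 2 + Real.sin θ ^ 2 := by
    rw [hz, Complex.sq_norm, Complex.normSq_add_mul_I]
  have hsin : Real.sin (θ/2) ^ 2 ≤ (θ/2) ^ 2 := by
    have h := Real.abs_sin_le_abs (x := θ/2)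
    calc Real.sin (θ/2) ^ 2 = |Real.sin (θ/2)| ^ 2 := (_root_.sq_abs _).symm
      _ ≤ |θ/2| ^ 2 := by gcongr
      _ = (θ/2) ^ 2 := _root_.sq_abs _
  have hcos : Real.cos θ = 1 - 2 * Real.sin (θ/2) ^ 2 := by
    have h1 := Real.cos_two_mul' (θ/2)
    have h2 := Real.sin_sq_add_cos_sq (θ/2)
    have h3 : 2 * (θ/2) = θ := by ring
    rw [h3] at h1; nlinarith
  have hsq : ‖Complex.exp (Complex.I * θ) - 1‖ ^ 2 ≤ |θ| ^ 2 := by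
    rw [_root_.sq_abs]; nlinarith [Real.sin_sq_add_cos_sq θ]
  exact (pow_le_pow_iff_left₀ (norm_nonneg _) (abs_nonneg _) two_ne_zero).mp hsq

lemma aux_exp_sub_one_le_two (r : ℝ) : ‖Complex.exp (Complex.I * r) - 1‖ ≤ 2 := by
  calc ‖Complex.exp (Complex.I * r) - 1‖ ≤ ‖Complex.exp (Complex.I * r)‖ + ‖(1:ℂ)‖ :=
        norm_sub_le _ _
    _ = 2 := by rw [aux_exp_norm_one]; norm_num

lemma aux_holder (ghat : ℝ → ℂ) (hghat : MemLp ghat 2 (volume : Measure ℝ))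
    (a : ℝ) (ha : 0 ≤ a) :
    ∫ ξ in {ξ : ℝ | |ξ| ≤ a}, ‖ghat ξ‖ ≤
      (2 * a) ^ ((1:ℝ)/2) * (∫ ξ : ℝ, ‖ghat ξ‖ ^ 2) ^ ((1:ℝ)/2) := by
  have hSeq : {ξ : ℝ | |ξ| ≤ a} = Set.Icc (-a) a := by
    ext ξ; simp [abs_le]
  have hSvol : volume {ξ : ℝ | |ξ| ≤ a} = ENNReal.ofReal (2 * a) := by
    rw [hSeq, Real.volume_Icc]; ring_nf
  haveI : Fact (volume {ξ : ℝ | |ξ| ≤ a} < ⊤) := ⟨by rw [hSvol]; exact ENNReal.ofReal_lt_top⟩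
  set μ := (volume : Measure ℝ).restrict {ξ : ℝ | |ξ| ≤ a} with hμ
  have hconj : (2:ℝ).HolderConjugate 2 := (Real.holderConjugate_iff_eq_conjExponent one_lt_two).mpr (by norm_num)
  have h1 : MemLp (fun _ : ℝ => (1:ℝ)) (ENNReal.ofReal 2) μ := memLp_const 1
  have h2 : MemLp (fun ξ => ‖ghat ξ‖) (ENNReal.ofReal 2) μ := by
    have := (hghat.restrict {ξ : ℝ | |ξ| ≤ a}).norm
    simpa [ENNReal.ofReal_ofNat] using this
  have key := integral_mul_le_Lp_mul_Lq_of_nonneg hconj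
    (Filter.Eventually.of_forall fun _ => by norm_num)
    (Filter.Eventually.of_forall fun ξ => norm_nonneg (ghat ξ)) h1 h2
  simp only [one_mul] at key
  have hi1 : ∫ ξ, (1:ℝ) ^ (2:ℝ) ∂μ = 2 * a := by
    simp [hμ, Measure.restrict_apply, Measure.real, hSvol, ha, ENNReal.toReal_ofReal (by linarith : (0:ℝ) ≤ 2*a)]
  have hsq : Integrable (fun ξ => ‖ghat ξ‖ ^ 2) (volume : Measure ℝ) := by
    have := hghat.integrable_norm_rpow (by norm_num) (by norm_num)
    simpa [ENNReal.toReal_ofNat, Real.rpow_natCast] using this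
  have hi2 : ∫ ξ, ‖ghat ξ‖ ^ (2:ℝ) ∂μ ≤ ∫ ξ : ℝ, ‖ghat ξ‖ ^ 2 := by
    have heq : ∫ ξ, ‖ghat ξ‖ ^ (2:ℝ) ∂μ = ∫ ξ in {ξ : ℝ | |ξ| ≤ a}, ‖ghat ξ‖ ^ 2 := by
      rw [hμ]; congr 1; ext ξ; rw [← Real.rpow_natCast ‖ghat ξ‖ 2]; norm_num
    rw [heq]
    exact setIntegral_le_integral hsq (Filter.Eventually.of_forall fun ξ => by positivity)
  calc ∫ ξ in {ξ : ℝ | |ξ| ≤ a}, ‖ghat ξ‖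
      ≤ (∫ ξ, (1:ℝ) ^ (2:ℝ) ∂μ) ^ ((1:ℝ)/2) * (∫ ξ, ‖ghat ξ‖ ^ (2:ℝ) ∂μ) ^ ((1:ℝ)/2) := key
    _ ≤ (2 * a) ^ ((1:ℝ)/2) * (∫ ξ : ℝ, ‖ghat ξ‖ ^ 2) ^ ((1:ℝ)/2) := by
        rw [hi1]
        have hb : (0:ℝ) ≤ ∫ ξ, ‖ghat ξ‖ ^ (2:ℝ) ∂μ := integral_nonneg fun ξ => by positivity
        exact mul_le_mul_of_nonneg_left (Real.rpow_le_rpow hb hi2 (by norm_num))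
          (Real.rpow_nonneg (by linarith) _)

/-- Low-frequency estimate (Lemma 2.2) for the free Ostrovsky propagator:
for `g ∈ L²(ℝ)` with Fourier transform `ĝ`, for every `ε > 0` there exists
`δ ∈ (0, 1/2)` and a constant `C > 0` independent of `g, x, t, ε` such that
`|∫_{|ξ|≤8} e^{ixξ}(e^{it(ξ³+1/ξ)} − 1) ĝ(ξ) dξ| ≤ ε + (C|t|/δ)·‖g‖_{L²}`. -/
theorem stmt3 :
    ∃ C : ℝ, 0 < C ∧
      ∀ g ghat : ℝ → ℂ, MemLp g 2 (volume : Measure ℝ) →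
        MemLp ghat 2 (volume : Measure ℝ) →
        (∫ ξ : ℝ, ‖ghat ξ‖ ^ 2) = ∫ x : ℝ, ‖g x‖ ^ 2 →
        ∀ ε : ℝ, 0 < ε → ∃ δ : ℝ, 0 < δ ∧ δ < 1 / 2 ∧
          ∀ x t : ℝ,
            ‖∫ ξ in {ξ : ℝ | |ξ| ≤ 8},
                Complex.exp (Complex.I * x * ξ) *
                  (Complex.exp (Complex.I * t * (ξ ^ 3 + 1 / ξ)) - 1) * ghat ξ‖ ≤
              ε + C * |t| / δ * ((∫ x : ℝ, ‖g x‖ ^ 2) ^ ((1 : ℝ) / 2)) := by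
  refine ⟨2052, by norm_num, ?_⟩
  intro g ghat hg hghat hpl ε hε
  set N : ℝ := (∫ ξ : ℝ, ‖ghat ξ‖ ^ 2) ^ ((1:ℝ)/2) with hNdef
  have hIntsq : (0:ℝ) ≤ ∫ ξ : ℝ, ‖ghat ξ‖ ^ 2 := integral_nonneg fun ξ => by positivity
  have hN0 : 0 ≤ N := Real.rpow_nonneg hIntsq _
  have hq : 0 < ε / (2 * (N + 1)) := by positivity
  set δ : ℝ := min (1/4) ((ε / (2 * (N + 1))) ^ 2 / 2) with hδdef
  have hδ0 : 0 < δ := lt_min (by norm_num) (by positivity)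
  have hδ4 : δ ≤ 1/4 := min_le_left _ _
  refine ⟨δ, hδ0, by linarith, ?_⟩
  intro x t
  set S : Set ℝ := {ξ : ℝ | |ξ| ≤ 8} with hSdef
  set A : Set ℝ := {ξ : ℝ | |ξ| ≤ δ} with hAdef
  set B : Set ℝ := {ξ : ℝ | δ < |ξ| ∧ |ξ| ≤ 8} with hBdef
  set F : ℝ → ℂ := fun ξ : ℝ => Complex.exp (Complex.I * x * ξ) *
      (Complex.exp (Complex.I * t * (ξ ^ 3 + 1 / ξ)) - 1) * ghat ξ with hFdef
  have hAS : A ⊆ S := fun ξ hξ => by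
    simp only [hAdef, hSdef, Set.mem_setOf_eq] at *
    linarith
  have hBS : B ⊆ S := fun ξ hξ => hξ.2
  have hSAB : S = A ∪ B := by
    ext ξ
    simp only [hSdef, hAdef, hBdef, Set.mem_setOf_eq, Set.mem_union]
    constructor
    · intro h
      by_cases h' : |ξ| ≤ δ
      · exact Or.inl h'
      · exact Or.inr ⟨lt_of_not_ge h', h⟩
    · rintro (h | h)
      · linarith
      · exact h.2
  have hdisj : Disjoint A B := by
    rw [Set.disjoint_left]
    intro ξ hξA hξB
    exact absurd hξA (not_le.mpr hξB.1)
  have hAmeas : MeasurableSet A := by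
    have h : A = Set.Icc (-δ) δ := by ext ξ; simp [hAdef, abs_le]
    rw [h]; exact measurableSet_Icc
  have hBmeas : MeasurableSet B := by
    have h : B = (fun ξ : ℝ => |ξ|) ⁻¹' Set.Ioc δ 8 := by
      ext ξ; simp [hBdef, Set.mem_Ioc]
    rw [h]
    have habs : Measurable fun ξ : ℝ => |ξ| := _root_.continuous_abs.measurable
    exact habs measurableSet_Ioc
  have hSvol : volume S < ⊤ := by
    have h : S = Set.Icc (-8:ℝ) 8 := by ext ξ; simp [hSdef, abs_le]
    rw [h, Real.volume_Icc]; exact ENNReal.ofReal_lt_top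
  haveI : Fact (volume S < ⊤) := ⟨hSvol⟩
  have hghatS : IntegrableOn ghat S volume := by
    have h2 := hghat.restrict S
    exact memLp_one_iff_integrable.mp (h2.mono_exponent (by norm_num))
  have hgn : IntegrableOn (fun ξ => ‖ghat ξ‖) S volume := hghatS.norm
  have hmult : Measurable (fun ξ : ℝ => Complex.exp (Complex.I * x * ξ) *
      (Complex.exp (Complex.I * t * ((ξ:ℂ) ^ 3 + 1 / (ξ:ℂ))) - 1)) := by
    have h1 : Measurable fun ξ : ℝ => (ξ : ℂ) := Complex.measurable_ofReal
    have h2 : Measurable fun ξ : ℝ => Complex.I * x * (ξ:ℂ) := measurable_const.mul h1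
    have h3 : Measurable fun ξ : ℝ => (ξ:ℂ) ^ 3 + 1 / (ξ:ℂ) :=
      (h1.pow_const 3).add (measurable_const.div h1)
    have h4 : Measurable fun ξ : ℝ => Complex.I * t * ((ξ:ℂ) ^ 3 + 1 / (ξ:ℂ)) :=
      measurable_const.mul h3
    exact (Complex.measurable_exp.comp h2).mul
      ((Complex.measurable_exp.comp h4).sub measurable_const)
  have hcast1 : ∀ ξ : ℝ, Complex.I * (x:ℂ) * (ξ:ℂ) = Complex.I * ((x * ξ : ℝ) : ℂ) := by
    intro ξ; push_cast; ring
  have hcast2 : ∀ ξ : ℝ, Complex.I * (t:ℂ) * ((ξ:ℂ) ^ 3 + 1 / (ξ:ℂ))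
      = Complex.I * ((t * (ξ ^ 3 + 1 / ξ) : ℝ) : ℂ) := by
    intro ξ; push_cast; ring
  have hFnorm : ∀ ξ : ℝ, ‖F ξ‖
      = ‖Complex.exp (Complex.I * ((t * (ξ ^ 3 + 1 / ξ) : ℝ) : ℂ)) - 1‖ * ‖ghat ξ‖ := by
    intro ξ
    rw [hFdef]
    simp only [norm_mul]
    rw [hcast1 ξ, aux_exp_norm_one, one_mul, hcast2 ξ]
  have hFS : IntegrableOn F S volume := by
    apply Integrable.bdd_mul hghatS (hmult.aestronglyMeasurable)
    refine Filter.Eventually.of_forall fun ξ => ?_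
    rw [norm_mul, hcast1 ξ, aux_exp_norm_one, one_mul, hcast2 ξ]
    exact aux_exp_sub_one_le_two _
  have hFA : IntegrableOn F A volume := hFS.mono_set hAS
  have hFB : IntegrableOn F B volume := hFS.mono_set hBS
  have honA : ∀ ξ ∈ A, ‖F ξ‖ ≤ 2 * ‖ghat ξ‖ := by
    intro ξ _
    rw [hFnorm ξ]
    exact mul_le_mul_of_nonneg_right (aux_exp_sub_one_le_two _) (norm_nonneg _)
  have honB : ∀ ξ ∈ B, ‖F ξ‖ ≤ (513 * |t| / δ) * ‖ghat ξ‖ := by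
    intro ξ hξ
    rw [hFnorm ξ]
    refine mul_le_mul_of_nonneg_right ?_ (norm_nonneg _)
    refine le_trans (aux_exp_bound _) ?_
    have hξδ : δ < |ξ| := hξ.1
    have hξ8 : |ξ| ≤ 8 := hξ.2
    have h1 : |ξ ^ 3| ≤ 512 := by
      rw [_root_.abs_pow]
      calc |ξ| ^ 3 ≤ 8 ^ 3 := by gcongr
        _ = 512 := by norm_num
    have h2 : |1 / ξ| ≤ 1 / δ := by
      rw [abs_div, abs_one]
      exact one_div_le_one_div_of_le hδ0 hξδ.le
    have h3 : (512:ℝ) + 1/δ ≤ 513 / δ := by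
      have h512 : (512:ℝ) ≤ 512 / δ := by
        rw [le_div_iff₀ hδ0]; nlinarith
      have heq : (512:ℝ)/δ + 1/δ = 513/δ := by ring
      linarith
    calc |t * (ξ ^ 3 + 1 / ξ)| = |t| * |ξ ^ 3 + 1 / ξ| := abs_mul _ _
      _ ≤ |t| * (512 + 1/δ) := by
          refine mul_le_mul_of_nonneg_left ?_ (abs_nonneg t)
          calc |ξ ^ 3 + 1 / ξ| ≤ |ξ ^ 3| + |1 / ξ| := abs_add_le _ _
            _ ≤ 512 + 1/δ := add_le_add h1 h2
      _ ≤ 513 * |t| / δ := by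
          calc |t| * (512 + 1/δ) ≤ |t| * (513/δ) :=
                mul_le_mul_of_nonneg_left h3 (abs_nonneg t)
            _ = 513 * |t| / δ := by ring
  -- bound on A
  have hIA : ∫ ξ in A, ‖F ξ‖ ≤ ε := by
    have step1 : ∫ ξ in A, ‖F ξ‖ ≤ ∫ ξ in A, 2 * ‖ghat ξ‖ :=
      setIntegral_mono_on hFA.norm ((hgn.mono_set hAS).const_mul 2) hAmeas honA
    have step2 : ∫ ξ in A, 2 * ‖ghat ξ‖ = 2 * ∫ ξ in A, ‖ghat ξ‖ := integral_const_mul 2 _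
    have step3 : ∫ ξ in A, ‖ghat ξ‖ ≤ (2*δ)^((1:ℝ)/2) * N := by
      rw [hAdef]; exact aux_holder ghat hghat δ hδ0.le
    have hδle : (2*δ)^((1:ℝ)/2) ≤ ε / (2*(N+1)) := by
      have h2δ : 2*δ ≤ (ε/(2*(N+1)))^2 := by
        have hm := min_le_right (1/4:ℝ) ((ε / (2 * (N + 1))) ^ 2 / 2)
        rw [← hδdef] at hm
        linarith
      have hr := Real.rpow_le_rpow (by linarith : (0:ℝ) ≤ 2*δ) h2δ
        (by norm_num : (0:ℝ) ≤ 1/2)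
      have heq : ((ε/(2*(N+1)))^2)^((1:ℝ)/2) = ε/(2*(N+1)) := by
        rw [← Real.rpow_natCast (ε/(2*(N+1))) 2, ← Real.rpow_mul hq.le]
        norm_num
      rw [heq] at hr; exact hr
    have hN1 : (0:ℝ) < N + 1 := by linarith
    have hfinal : 2 * ((ε/(2*(N+1))) * N) ≤ ε := by
      rw [show 2 * ((ε/(2*(N+1))) * N) = ε * N / (N+1) from by field_simp]
      rw [div_le_iff₀ hN1]
      nlinarith
    calc ∫ ξ in A, ‖F ξ‖ ≤ 2 * ∫ ξ in A, ‖ghat ξ‖ := by rw [← step2]; exact step1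
      _ ≤ 2 * ((2*δ)^((1:ℝ)/2) * N) := by linarith
      _ ≤ 2 * ((ε/(2*(N+1))) * N) := by
          have := mul_le_mul_of_nonneg_right hδle hN0
          linarith
      _ ≤ ε := hfinal
  -- bound on B
  have hIB : ∫ ξ in B, ‖F ξ‖ ≤ 2052 * |t| / δ * N := by
    have c0 : (0:ℝ) ≤ 513 * |t| / δ := by positivity
    have step1 : ∫ ξ in B, ‖F ξ‖ ≤ ∫ ξ in B, (513*|t|/δ) * ‖ghat ξ‖ :=
      setIntegral_mono_on hFB.norm ((hgn.mono_set hBS).const_mul _) hBmeas honB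
    have step2 : ∫ ξ in B, (513*|t|/δ) * ‖ghat ξ‖ = (513*|t|/δ) * ∫ ξ in B, ‖ghat ξ‖ :=
      integral_const_mul _ _
    have step3 : ∫ ξ in B, ‖ghat ξ‖ ≤ ∫ ξ in S, ‖ghat ξ‖ :=
      setIntegral_mono_set hgn
        (Filter.Eventually.of_forall fun ξ => norm_nonneg _)
        (HasSubset.Subset.eventuallyLE hBS)
    have step4 : ∫ ξ in S, ‖ghat ξ‖ ≤ 4 * N := by
      have h := aux_holder ghat hghat 8 (by norm_num)
      have h16 : ((2:ℝ)*8) ^ ((1:ℝ)/2) = 4 := by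
        rw [show (2:ℝ)*8 = 4^(2:ℕ) by norm_num, ← Real.rpow_natCast 4 2,
          ← Real.rpow_mul (by norm_num : (0:ℝ) ≤ 4)]
        norm_num
      rw [h16] at h
      rw [hSdef]
      exact h
    have hB0 : (0:ℝ) ≤ ∫ ξ in B, ‖ghat ξ‖ := integral_nonneg fun ξ => norm_nonneg _
    calc ∫ ξ in B, ‖F ξ‖ ≤ (513*|t|/δ) * ∫ ξ in B, ‖ghat ξ‖ := by rw [← step2]; exact step1
      _ ≤ (513*|t|/δ) * (4 * N) := by
          refine mul_le_mul_of_nonneg_left ?_ c0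
          linarith
      _ = 2052 * |t| / δ * N := by ring
  -- conclusion
  have hsplit : ∫ ξ in S, ‖F ξ‖ = (∫ ξ in A, ‖F ξ‖) + ∫ ξ in B, ‖F ξ‖ := by
    rw [hSAB]
    exact setIntegral_union hdisj hBmeas hFA.norm hFB.norm
  calc ‖∫ ξ in S, F ξ‖ ≤ ∫ ξ in S, ‖F ξ‖ := norm_integral_le_integral_norm _
    _ = (∫ ξ in A, ‖F ξ‖) + ∫ ξ in B, ‖F ξ‖ := hsplit
    _ ≤ ε + 2052 * |t| / δ * N := add_le_add hIA hIB
    _ = ε + 2052 * |t| / δ * ((∫ x : ℝ, ‖g x‖ ^ 2) ^ ((1 : ℝ) / 2)) := by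
        rw [hNdef, hpl]
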